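/- Fix an integer d ≥ 1. For every constant c > 0 there exist a point p ∈ ℝ^d and a radius r > 0 with closedBall(p, r) ⊆ [0,1]^d, such that every collection of at most 2^d − 1 dyadic cubes whose union contains closedBall(p, r) has total volume greater than c times the volume of the ball closedBall(p, r). -/

import Mathlib

open MeasureTheory Metric Set

/-- The dyadic cube of level `k` with index vector `a` in the unit cube `[0,1]^d`:
`∏ᵢ [aᵢ·2⁻ᵏ, (aᵢ+1)·2⁻ᵏ]`. -/
def dyadicCube (d k : ℕ) (a : Fin d → ℕ) : Set (EuclideanSpace ℝ (Fin d)) :=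
  {x | ∀ i, x i ∈ Icc ((a i : ℝ) / 2 ^ k) (((a i : ℝ) + 1) / 2 ^ k)}

/-- The unit cube `[0,1]^d`. -/
def unitCube (d : ℕ) : Set (EuclideanSpace ℝ (Fin d)) := {x | ∀ i, x i ∈ Icc (0 : ℝ) 1}

lemma dist_coord_le' {d : ℕ} (x y : EuclideanSpace ℝ (Fin d)) (i : Fin d) :
    dist (x i) (y i) ≤ dist x y := by
  rw [EuclideanSpace.dist_eq, show dist (x i) (y i) = Real.sqrt (dist (x i) (y i) ^ 2) by
    rw [Real.sqrt_sq dist_nonneg]]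
  exact Real.sqrt_le_sqrt (Finset.single_le_sum (f := fun j => dist (x j) (y j) ^ 2)
    (fun j _ => sq_nonneg _) (Finset.mem_univ i))

/-- A level-`k` (`k ≥ 1`) dyadic interval cannot contain both `1/2 - δ` and `1/2 + δ`. -/
lemma key_ineq (k a : ℕ) (hk : 1 ≤ k) {δ : ℝ} (hδ : 0 < δ)
    (hlo : (a : ℝ) / 2 ^ k ≤ 1 / 2 - δ) (hup : 1 / 2 + δ ≤ ((a : ℝ) + 1) / 2 ^ k) : False := by
  have h2k : (0 : ℝ) < 2 ^ k := by positivity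
  have e2 : (2 : ℝ) ^ k = 2 ^ (k - 1) * 2 := by
    rw [← pow_succ]; congr 1; omega
  have hA : (a : ℝ) < 2 ^ (k - 1) := by
    rw [div_le_iff₀ h2k] at hlo
    nlinarith [mul_pos h2k hδ]
  have hB : (2 : ℝ) ^ (k - 1) < (a : ℝ) + 1 := by
    rw [le_div_iff₀ h2k] at hup
    nlinarith [mul_pos h2k hδ]
  have hA' : a < 2 ^ (k - 1) := by
    exact_mod_cast (by push_cast; exact hA : (a : ℝ) < ((2 ^ (k - 1) : ℕ) : ℝ))
  have hB' : 2 ^ (k - 1) < a + 1 := by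
    exact_mod_cast (by push_cast; exact hB : ((2 ^ (k - 1) : ℕ) : ℝ) < ((a + 1 : ℕ) : ℝ))
  omega

/-- No dyadic cube of level `≥ 1` can contain two distinct sign-perturbations of the center. -/
lemma key_sep {d : ℕ} {k : ℕ} (hk : 1 ≤ k) (a : Fin d → ℕ) {δ : ℝ} (hδ : 0 < δ)
    {ε ε' : Fin d → Bool}
    (h1 : (WithLp.toLp 2 (fun i => 1/2 + (if ε i then δ else -δ)) : EuclideanSpace ℝ (Fin d)) ∈ dyadicCube d k a)
    (h2 : (WithLp.toLp 2 (fun i => 1/2 + (if ε' i then δ else -δ)) : EuclideanSpace ℝ (Fin d)) ∈ dyadicCube d k a) :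
    ε = ε' := by
  funext i
  by_contra hne
  have H1 := h1 i
  have H2 := h2 i
  simp only [dyadicCube, Set.mem_setOf_eq, Set.mem_Icc] at H1 H2
  obtain ⟨H1l, H1r⟩ := H1
  obtain ⟨H2l, H2r⟩ := H2
  rcases Bool.eq_false_or_eq_true (ε i) with h | h <;>
    rcases Bool.eq_false_or_eq_true (ε' i) with h' | h'
  all_goals first
    | exact hne (h.trans h'.symm)
    | (rw [h] at H1l H1r; rw [h'] at H2l H2r;
       norm_num at H1l H1r H2l H2r;
       exact key_ineq k (a i) hk hδ (by linarith) (by linarith))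

set_option maxHeartbeats 1000000 in
/-- Lower bound: no `2^d − 1` dyadic cubes of relatively small total volume can always
cover a ball; i.e. the uniform hypercube tiling has Arrwwid number at least `2^d`. -/
theorem cube_tiling_arrwwid_lower_bound (d : ℕ) (hd : 1 ≤ d) (c : ℝ) (hc : 0 < c) :
    ∃ (p : EuclideanSpace ℝ (Fin d)) (r : ℝ), 0 < r ∧ closedBall p r ⊆ unitCube d ∧
      ∀ S : Finset (ℕ × (Fin d → ℕ)), S.card ≤ 2 ^ d - 1 →
        (∀ q ∈ S, ∀ i, q.2 i < 2 ^ q.1) →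
        closedBall p r ⊆ ⋃ q ∈ S, dyadicCube d q.1 q.2 →
        ENNReal.ofReal c * volume (closedBall p r) <
          ∑ q ∈ S, volume (dyadicCube d q.1 q.2) := by
  set p : EuclideanSpace ℝ (Fin d) := WithLp.toLp 2 (fun _ => (1/2 : ℝ)) with hp
  set V := volume (ball (0 : EuclideanSpace ℝ (Fin d)) 1) with hVdef
  have hV0 : 0 < V := measure_ball_pos _ _ one_pos
  have hVt : V < ⊤ := measure_ball_lt_top
  set r : ℝ := min (1/2) ((1/2)^d / (2*c)) with hrdef
  have hr0 : 0 < r := lt_min (by norm_num) (by positivity)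
  have hrhalf : r ≤ 1/2 := min_le_left _ _
  have hball : ∀ s : ℝ, s ≤ 1/2 → closedBall p s ⊆ unitCube d := by
    intro s hs x hx i
    have h1 : dist (x i) (p i) ≤ s := le_trans (dist_coord_le' x p i) hx
    have hpi : p i = 1/2 := rfl
    rw [hpi, Real.dist_eq] at h1
    have h2 := abs_le.1 h1
    constructor
    · linarith [h2.1]
    · linarith [h2.2]
  refine ⟨p, r, hr0, hball r hrhalf, ?_⟩
  intro S hcard ha hcover
  set δ : ℝ := r / d with hδdef
  have hd' : (1:ℝ) ≤ d := by exact_mod_cast hd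
  have hdne : (d:ℝ) ≠ 0 := by positivity
  have hδ0 : 0 < δ := by positivity
  set qpt : (Fin d → Bool) → EuclideanSpace ℝ (Fin d) :=
    fun ε => WithLp.toLp 2 (fun i => 1/2 + (if ε i then δ else -δ)) with hqpt
  have hqmem : ∀ ε, qpt ε ∈ closedBall p r := by
    intro ε
    rw [mem_closedBall, EuclideanSpace.dist_eq]
    have hterm : ∀ i : Fin d, dist (qpt ε i) (p i) ^ 2 = δ ^ 2 := by
      intro i
      have hqi : qpt ε i - p i = (if ε i = true then δ else -δ) := by
        show (1/2 + (if ε i = true then δ else -δ)) - 1/2 = _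
        ring
      rw [Real.dist_eq, sq_abs, hqi]
      split_ifs <;> ring
    have hsum : (∑ i, dist (qpt ε i) (p i) ^ 2) = d * δ ^ 2 := by
      rw [Finset.sum_congr rfl (fun i _ => hterm i)]
      simp [mul_comm]
    rw [hsum]
    have hle : (d:ℝ) * δ ^ 2 ≤ r ^ 2 := by
      have he : (d:ℝ) * (r/d)^2 = r^2/d := by field_simp
      rw [hδdef, he]
      exact div_le_self (by positivity) hd'
    calc Real.sqrt ((d:ℝ) * δ^2) ≤ Real.sqrt (r^2) := Real.sqrt_le_sqrt hle
      _ = r := Real.sqrt_sq hr0.le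
  -- there must be a level-0 cube in S
  have hex : ∃ q ∈ S, q.1 = 0 := by
    by_contra h
    push_neg at h
    have hchoice : ∀ ε : Fin d → Bool, ∃ q ∈ S, qpt ε ∈ dyadicCube d q.1 q.2 := by
      intro ε
      have := hcover (hqmem ε)
      simpa using this
    choose f hfS hfmem using hchoice
    have hinj : Function.Injective f := by
      intro ε ε' he
      have h1 := hfmem ε
      have h2 := hfmem ε'
      rw [he] at h1
      have hk1 : 1 ≤ (f ε').1 := by
        have := h (f ε') (hfS ε')
        omega
      exact key_sep hk1 _ hδ0 h1 h2
    have hcard2 : Fintype.card (Fin d → Bool) ≤ S.card := by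
      have hinj2 : Function.Injective (fun ε => (⟨f ε, hfS ε⟩ : {q // q ∈ S})) := by
        intro ε ε' he
        exact hinj (congrArg Subtype.val he)
      simpa using Fintype.card_le_of_injective _ hinj2
    simp only [Fintype.card_fun, Fintype.card_fin, Fintype.card_bool] at hcard2
    have h2d := Nat.one_le_two_pow (n := d)
    omega
  obtain ⟨q₀, hq₀S, hq₀⟩ := hex
  have hq₀a : ∀ i, q₀.2 i = 0 := by
    intro i
    have := ha q₀ hq₀S i
    rw [hq₀] at this
    omega
  have hsub : closedBall p (1/2 : ℝ) ⊆ dyadicCube d q₀.1 q₀.2 := by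
    intro x hx i
    have hxi := hball (1/2) le_rfl hx i
    simp only [dyadicCube, Set.mem_setOf_eq, hq₀, hq₀a i, Nat.cast_zero, pow_zero]
    simpa using hxi
  have h2sum : volume (dyadicCube d q₀.1 q₀.2) ≤ ∑ q ∈ S, volume (dyadicCube d q.1 q.2) := by
    apply Finset.single_le_sum (f := fun q => volume (dyadicCube d q.1 q.2)) (fun q _ => zero_le) hq₀S
  have h1 : volume (closedBall p (1/2:ℝ)) ≤ ∑ q ∈ S, volume (dyadicCube d q.1 q.2) :=
    le_trans (measure_mono hsub) h2sum
  have hvr : volume (closedBall p r) = ENNReal.ofReal (r ^ d) * V := by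
    rw [Measure.addHaar_closedBall _ _ hr0.le, finrank_euclideanSpace_fin]
  have hvh : volume (closedBall p (1/2:ℝ)) = ENNReal.ofReal ((1/2:ℝ) ^ d) * V := by
    rw [Measure.addHaar_closedBall _ _ (by norm_num), finrank_euclideanSpace_fin]
  have hreal : c * r ^ d < (1/2:ℝ) ^ d := by
    have h2 : r ^ d ≤ r := by
      calc r ^ d ≤ r ^ 1 := pow_le_pow_of_le_one hr0.le (by linarith) hd
        _ = r := pow_one r
    have h3 : r ≤ (1/2)^d / (2*c) := min_le_right _ _
    have h5 : (0:ℝ) < (1/2)^d := by positivity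
    have h4 : c * r ≤ (1/2)^d / 2 := by
      have h6 := mul_le_mul_of_nonneg_left h3 hc.le
      have h7 : c * ((1/2)^d / (2*c)) = (1/2)^d / 2 := by field_simp
      linarith [h6, h7.le]
    nlinarith [mul_le_mul_of_nonneg_left h2 hc.le]
  calc ENNReal.ofReal c * volume (closedBall p r)
      = ENNReal.ofReal (c * r ^ d) * V := by
        rw [hvr, ← mul_assoc, ← ENNReal.ofReal_mul hc.le]
    _ < ENNReal.ofReal ((1/2:ℝ)^d) * V := by
        rw [mul_comm _ V, mul_comm _ V]
        refine ENNReal.mul_lt_mul_right hV0.ne' hVt.ne ?_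
        exact (ENNReal.ofReal_lt_ofReal_iff (by positivity)).mpr hreal
    _ = volume (closedBall p (1/2:ℝ)) := hvh.symm
    _ ≤ _ := h1
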